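/- Let G be a chordal graph, S a minimal separator in G, and D a component of G − S that is full to S. Then there exists a maximal clique Ω of G with S ⊊ Ω ⊆ N[D]. -/

import Mathlib

open SimpleGraph

variable {V : Type*}

/-- `D` is (the vertex set of) a connected component of `G - S`. -/
def IsCompOf (G : SimpleGraph V) (S D : Set V) : Prop :=
  D.Nonempty ∧ Disjoint D S ∧ (G.induce D).Connected ∧
    ∀ v ∈ D, ∀ w : V, G.Adj v w → w ∉ S → w ∈ D

/-- The open neighborhood `N(D)` of a vertex set `D`. -/
def nbhd (G : SimpleGraph V) (D : Set V) : Set V :=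
  {v | v ∉ D ∧ ∃ d ∈ D, G.Adj v d}

/-- The closed neighborhood `N[D]` of a vertex set `D`. -/
def closedNbhd (G : SimpleGraph V) (D : Set V) : Set V :=
  D ∪ nbhd G D

/-- `D` is full to `S`: every vertex of `S` has a neighbor in `D`. -/
def FullTo (G : SimpleGraph V) (S D : Set V) : Prop :=
  ∀ s ∈ S, ∃ d ∈ D, G.Adj s d

/-- `S` is a minimal separator: `G - S` has at least two components full to `S`. -/
def IsMinSep (G : SimpleGraph V) (S : Set V) : Prop :=
  ∃ D₁ D₂ : Set V, IsCompOf G S D₁ ∧ IsCompOf G S D₂ ∧ D₁ ≠ D₂ ∧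
    FullTo G S D₁ ∧ FullTo G S D₂

/-- A graph is chordal if it has no induced cycle of length at least 4. -/
def IsChordal (G : SimpleGraph V) : Prop :=
  ∀ n : ℕ, 4 ≤ n → IsEmpty (cycleGraph n ↪g G)

/-- `Ω` is a maximal clique of `G`. -/
def MaxClique (G : SimpleGraph V) (Ω : Set V) : Prop :=
  G.IsClique Ω ∧ ∀ T : Set V, G.IsClique T → Ω ⊆ T → T = Ω

open List Relation

section Reach
variable {V : Type*} {G : SimpleGraph V} {C C' : Set V} {x y z : V} {l : List V}

/-- single adjacency step within the set `C` -/
def Stp (G : SimpleGraph V) (C : Set V) (a b : V) : Prop := G.Adj a b ∧ a ∈ C ∧ b ∈ C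

/-- reachability within the set `C` -/
def ReachIn (G : SimpleGraph V) (C : Set V) : V → V → Prop := ReflTransGen (Stp G C)

lemma stp_symm : Symmetric (Stp G C) := fun _ _ ⟨h, ha, hb⟩ => ⟨h.symm, hb, ha⟩

lemma ReachIn.symm (h : ReachIn G C x y) : ReachIn G C y x :=
  haveI : Std.Symm (Stp G C) := ⟨fun _ _ h => stp_symm h⟩
  Std.Symm.symm (r := ReflTransGen (Stp G C)) _ _ h

lemma ReachIn.trans (h : ReachIn G C x y) (h' : ReachIn G C y z) : ReachIn G C x z :=
  Relation.ReflTransGen.trans h h'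

lemma ReachIn.mono (hsub : C ⊆ C') (h : ReachIn G C x y) : ReachIn G C' x y :=
  Relation.ReflTransGen.mono (r := Stp G C) (p := Stp G C')
    (fun a b (hh : Stp G C a b) => (⟨hh.1, hsub hh.2.1, hsub hh.2.2⟩ : Stp G C' a b)) x y h

lemma reachIn_of_adj (h : G.Adj x y) (hx : x ∈ C) (hy : y ∈ C) : ReachIn G C x y :=
  ReflTransGen.single ⟨h, hx, hy⟩

lemma reachIn_of_connected (hconn : (G.induce C).Connected) (hx : x ∈ C) (hy : y ∈ C) :
    ReachIn G C x y := by
  obtain ⟨w⟩ := hconn.preconnected ⟨x, hx⟩ ⟨y, hy⟩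
  have : ∀ (a b : C) (w : (G.induce C).Walk a b), ReachIn G C a.1 b.1 := by
    intro a b w
    induction w with
    | nil => exact ReflTransGen.refl
    | cons h p ih => exact ReflTransGen.head ⟨h, Subtype.prop _, Subtype.prop _⟩ ih
  exact this _ _ w

/-- a walk within `C` from `x` to `y`, as a list -/
def GoodWalk (G : SimpleGraph V) (C : Set V) (x y : V) (l : List V) : Prop :=
  l ≠ [] ∧ l.Chain' G.Adj ∧ l.head? = some x ∧ l.getLast? = some y ∧ ∀ v ∈ l, v ∈ C

lemma reachIn_toList (hx : x ∈ C) (h : ReachIn G C x y) : ∃ l, GoodWalk G C x y l := by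
  induction h with
  | refl => exact ⟨[x], by simp [GoodWalk, hx, List.Chain']⟩
  | @tail b c _ hstep ih =>
      obtain ⟨l, hne, hch, hh, hl, hmem⟩ := ih
      refine ⟨l ++ [c], by simp, ?_, ?_, by simp, ?_⟩
      · rw [List.Chain', List.isChain_append]
        refine ⟨hch, List.isChain_singleton _, ?_⟩
        intro a ha b hb
        rw [hl] at ha
        simp only [head?_cons, Option.mem_some_iff] at ha hb
        subst ha; subst hb; exact hstep.1
      · rcases l with _ | ⟨a, t⟩
        · simp at hne
        · simpa using hh
      · intro v hv
        rcases List.mem_append.mp hv with h1 | h2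
        · exact hmem v h1
        · simp only [List.mem_singleton] at h2; subst h2; exact hstep.2.2

lemma listToReachIn : ∀ (l : List V), l.Chain' G.Adj → (∀ v ∈ l, v ∈ C) →
    l.head? = some x → l.getLast? = some y → ReachIn G C x y := by
  intro l
  induction l generalizing x with
  | nil => simp
  | cons a t ih =>
      intro hch hmem hh hl
      simp only [head?_cons, Option.some_inj] at hh
      subst hh
      rcases t with _ | ⟨b, t'⟩
      · simp only [getLast?_singleton, Option.some_inj] at hl
        subst hl; exact ReflTransGen.refl
      · have hadj : G.Adj a b := (List.isChain_cons_cons.mp hch).1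
        have h1 : ReachIn G C b y := by
          refine ih (List.isChain_cons_cons.mp hch).2 ?_ rfl ?_
          · intro v hv; exact hmem v (List.mem_cons_of_mem _ hv)
          · simpa using hl
        exact ReflTransGen.head ⟨hadj, hmem a (by simp), hmem b (by simp)⟩ h1
def InducedL (G : SimpleGraph V) (l : List V) : Prop :=
  ∀ i j (hi : i < l.length) (hj : j < l.length), i + 1 < j → ¬ G.Adj (l[i]'hi) (l[j]'hj)

lemma getLast?_take_helper {α : Type*} {l : List α} {i : ℕ} (hi : i < l.length) :
    (l.take (i+1)).getLast? = some (l[i]'hi) := by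
  have h := List.take_succ (l := l) (i := i)
  rw [List.getElem?_eq_getElem hi] at h
  rw [h]
  simp only [Option.toList_some]
  rw [List.getLast?_concat]

lemma head?_take_helper {α : Type*} {l : List α} {i : ℕ} :
    (l.take (i+1)).head? = l.head? := by
  cases l <;> simp

lemma chain'_getElem {R : V → V → Prop} (h : l.Chain' R) {i : ℕ} (hi : i + 1 < l.length) :
    R (l[i]'(by omega)) (l[i+1]'hi) := List.isChain_iff_getElem.mp h i (by omega)

lemma shortcut_adj (hl : GoodWalk G C x y l) {i j : ℕ} (hi : i < l.length) (hj : j < l.length)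
    (h2 : i + 2 ≤ j) (hadj : G.Adj (l[i]'hi) (l[j]'hj)) :
    ∃ l', GoodWalk G C x y l' ∧ l'.length < l.length := by
  obtain ⟨hne, hch, hh, hgl, hmem⟩ := hl
  refine ⟨l.take (i+1) ++ l.drop j, ⟨?_, ?_, ?_, ?_, ?_⟩, ?_⟩
  · apply List.ne_nil_of_length_pos
    rw [List.length_append, List.length_take]
    omega
  · rw [List.Chain', List.isChain_append]
    refine ⟨hch.take _, hch.drop _, ?_⟩
    intro a ha b hb
    rw [getLast?_take_helper hi] at ha
    rw [List.head?_drop, List.getElem?_eq_getElem hj] at hb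
    simp only [Option.mem_some_iff] at ha hb
    subst ha; subst hb; exact hadj
  · rw [List.head?_append, head?_take_helper, hh]; rfl
  · rw [List.getLast?_append]
    have hd : (l.drop j).getLast? = some y := by
      rw [List.getLast?_eq_getElem?, List.getElem?_drop, List.length_drop]
      rw [List.getLast?_eq_getElem?] at hgl
      rw [show j + (l.length - j - 1) = l.length - 1 by omega]
      exact hgl
    rw [hd]; rfl
  · intro v hv
    rcases List.mem_append.mp hv with h | h
    · exact hmem v (List.take_subset _ _ h)
    · exact hmem v (List.drop_subset _ _ h)
  · rw [List.length_append, List.length_take, List.length_drop]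
    omega

lemma shortcut_eq (hl : GoodWalk G C x y l) {i j : ℕ} (hi : i < l.length) (hj : j < l.length)
    (hij : i < j) (heq : (l[i]'hi) = (l[j]'hj)) :
    ∃ l', GoodWalk G C x y l' ∧ l'.length < l.length := by
  by_cases hj1 : j + 1 < l.length
  · have hadj : G.Adj (l[i]'hi) (l[j+1]'hj1) := by
      rw [heq]; exact chain'_getElem hl.2.1 hj1
    exact shortcut_adj hl hi hj1 (by omega) hadj
  · obtain ⟨hne, hch, hh, hgl, hmem⟩ := hl
    have hjl : j = l.length - 1 := by omega
    subst hjl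
    have hy : (l[l.length - 1]'hj) = y := by
      rw [List.getLast?_eq_getElem?, List.getElem?_eq_getElem (by omega : l.length - 1 < l.length)] at hgl
      exact Option.some_inj.mp hgl
    refine ⟨l.take (i+1), ⟨?_, hch.take _, ?_, ?_, ?_⟩, ?_⟩
    · apply List.ne_nil_of_length_pos
      rw [List.length_take]
      omega
    · rw [head?_take_helper, hh]
    · rw [getLast?_take_helper hi, heq, hy]
    · intro v hv; exact hmem v (List.take_subset _ _ hv)
    · rw [List.length_take]; omega

lemma exists_induced_path (hex : ∃ l, GoodWalk G C x y l) :
    ∃ l, GoodWalk G C x y l ∧ l.Nodup ∧ InducedL G l := by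
  classical
  obtain ⟨l₀, hl₀⟩ := hex
  have hexn : ∃ n, ∃ l, GoodWalk G C x y l ∧ l.length = n := ⟨l₀.length, l₀, hl₀, rfl⟩
  obtain ⟨l, hl, hlen⟩ := Nat.find_spec hexn
  have hmin : ∀ l', GoodWalk G C x y l' → l.length ≤ l'.length := by
    intro l' hl'
    rw [hlen]
    by_contra hcon
    exact Nat.find_min hexn (by omega) ⟨l', hl', rfl⟩
  refine ⟨l, hl, ?_, ?_⟩
  · rw [List.nodup_iff_injective_get]
    intro a b hab
    by_contra hne
    rcases lt_trichotomy a b with h | h | h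
    · obtain ⟨l', hl', hlt⟩ := shortcut_eq hl a.2 b.2 h hab
      exact absurd (hmin l' hl') (by omega)
    · exact hne (Fin.ext (by omega))
    · obtain ⟨l', hl', hlt⟩ := shortcut_eq hl b.2 a.2 h hab.symm
      exact absurd (hmin l' hl') (by omega)
  · intro i j hi hj hij hadj
    obtain ⟨l', hl', hlt⟩ := shortcut_adj hl hi hj (by omega) hadj
    exact absurd (hmin l' hl') (by omega)

def GoodPath (G : SimpleGraph V) (C : Set V) (l : List V) : Prop :=
  l ≠ [] ∧ l.Chain' G.Adj ∧ l.Nodup ∧ InducedL G l ∧ ∀ v ∈ l, v ∈ C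

lemma reachIn_segment (hch : l.Chain' G.Adj) (hmem : ∀ v ∈ l, v ∈ C) (i : ℕ) :
    ∀ j (hij : i ≤ j) (hj : j < l.length), ReachIn G C (l[i]'(by omega)) (l[j]'hj) := by
  intro j
  induction j with
  | zero =>
      intro hij hj
      have : i = 0 := by omega
      subst this; exact ReflTransGen.refl
  | succ n ih =>
      intro hij hj
      rcases Nat.lt_or_ge i (n+1) with h | h
      · have hn : n < l.length := by omega
        refine ReflTransGen.tail (ih (by omega) hn) ?_
        exact ⟨chain'_getElem hch hj, hmem _ (List.getElem_mem hn), hmem _ (List.getElem_mem hj)⟩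
      · have : i = n+1 := by omega
        subst this; exact ReflTransGen.refl

lemma exists_max_path [Fintype V] (hne : C.Nonempty) :
    ∃ l, GoodPath G C l ∧ ∀ l', GoodPath G C l' → l'.length ≤ l.length := by
  classical
  obtain ⟨c, hc⟩ := hne
  have hP1 : GoodPath G C [c] := by
    refine ⟨by simp, List.isChain_singleton _, by simp, ?_, by simpa using hc⟩
    intro i j hi hj hij
    simp only [List.length_singleton] at hi hj
    exact absurd hij (by omega)
  set P : ℕ → Prop := fun n => ∃ l, GoodPath G C l ∧ l.length = n with hPdef
  have h1 : P 1 := ⟨[c], hP1, rfl⟩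
  have hcard : 1 ≤ Fintype.card V := Fintype.card_pos_iff.mpr ⟨c⟩
  obtain ⟨l, hl, hlen⟩ : P (Nat.findGreatest P (Fintype.card V)) := Nat.findGreatest_spec hcard h1
  refine ⟨l, hl, ?_⟩
  intro l' hl'
  rw [hlen]
  exact Nat.le_findGreatest (hl'.2.2.1.length_le_card) ⟨l', hl', rfl⟩

lemma InducedL.reverse (h : InducedL G l) : InducedL G l.reverse := by
  intro i j hi hj hij hadj
  have hi' := hi; have hj' := hj
  rw [List.length_reverse] at hi' hj'
  rw [List.getElem_reverse, List.getElem_reverse] at hadj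
  exact h (l.length - 1 - j) (l.length - 1 - i) (by omega) (by omega) (by omega) hadj.symm

lemma GoodPath.reverse (h : GoodPath G C l) : GoodPath G C l.reverse := by
  obtain ⟨hne, hch, hnd, hind, hmem⟩ := h
  refine ⟨by simpa using hne, ?_, by simpa using hnd, hind.reverse,
    fun v hv => hmem v (by simpa using hv)⟩
  rw [List.Chain', List.isChain_reverse]
  exact List.IsChain.imp (fun a b hab => hab.symm) hch

lemma remove_head [Fintype V]
    (hconn : ∀ a ∈ C, ∀ b ∈ C, ReachIn G C a b)
    (hl : GoodPath G C l) (hmax : ∀ l', GoodPath G C l' → l'.length ≤ l.length)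
    (h0 : 0 < l.length) (h1 : 1 < l.length) :
    ∀ a ∈ C \ {l[0]'h0}, ReachIn G (C \ {l[0]'h0}) a (l[1]'h1) := by
  obtain ⟨hne, hch, hnd, hind, hmem⟩ := hl
  set v := l[0]'h0 with hv
  set w := l[1]'h1 with hw
  have htail : ∀ j (hj : j < l.length), 0 < j → (l[j]'hj) ∈ C \ {v} := by
    intro j hj hj0
    refine ⟨hmem _ (List.getElem_mem hj), ?_⟩
    simp only [Set.mem_singleton_iff, hv]
    intro heq
    have := hnd.getElem_inj_iff.mp heq
    omega
  have hreach_tail : ∀ j (hj : j < l.length), 0 < j → ReachIn G (C \ {v}) (l[j]'hj) w := by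
    intro j hj hj0
    have hchT : l.tail.Chain' G.Adj := hch.tail
    have hmemT : ∀ u ∈ l.tail, u ∈ C \ {v} := by
      intro u hu
      obtain ⟨k, hk, rfl⟩ := List.getElem_of_mem hu
      rw [List.getElem_tail]
      exact htail _ _ (by omega)
    have hjT : j - 1 < l.tail.length := by rw [List.length_tail]; omega
    have hseg := reachIn_segment hchT hmemT 0 (j-1) (by omega) hjT
    rw [List.getElem_tail, List.getElem_tail] at hseg
    have e1 : j - 1 + 1 = j := by omega
    simp only [e1] at hseg
    haveI : Std.Symm (Stp G (C \ {v})) := ⟨fun _ _ ⟨h, ha, hb⟩ => ⟨h.symm, hb, ha⟩⟩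
    exact (Std.Symm.symm (r := ReflTransGen (Stp G (C \ {v}))) _ _ hseg)
  have hext : ∀ z', z' ∈ C → z' ≠ v → G.Adj v z' → ReachIn G (C \ {v}) z' w := by
    intro z' hz'C hz'v hadj
    by_contra hcon
    have hz'm : z' ∈ C \ {v} := ⟨hz'C, by simpa using hz'v⟩
    have hz'notl : z' ∉ l := by
      intro hmem'
      obtain ⟨k, hk, hkeq⟩ := List.getElem_of_mem hmem'
      have hk0 : 0 < k := by
        rcases Nat.eq_zero_or_pos k with h | h
        · exfalso; apply hz'v; rw [← hkeq, hv]; subst h; rfl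
        · exact h
      rw [← hkeq] at hcon
      exact hcon (hreach_tail k hk hk0)
    have hnoadj : ∀ j (hj : j < l.length), 0 < j → ¬ G.Adj z' (l[j]'hj) := by
      intro j hj hj0 hadj'
      exact hcon (ReflTransGen.head ⟨hadj', hz'm, htail j hj hj0⟩ (hreach_tail j hj hj0))
    have hgood : GoodPath G C (z' :: l) := by
      refine ⟨by simp, ?_, List.nodup_cons.mpr ⟨hz'notl, hnd⟩, ?_, ?_⟩
      · rw [List.Chain', List.isChain_cons]
        refine ⟨?_, hch⟩
        intro y hy
        rw [List.head?_eq_getElem?, List.getElem?_eq_getElem h0] at hy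
        simp only [Option.mem_some_iff] at hy
        subst hy
        exact hadj.symm
      · intro i j hi hj hij hadj'
        rcases i with _ | i
        · obtain ⟨j', rfl⟩ : ∃ j', j = j' + 1 := ⟨j - 1, by omega⟩
          rw [List.getElem_cons_zero, List.getElem_cons_succ] at hadj'
          exact hnoadj j' (by simpa using hj) (by omega) hadj'
        · obtain ⟨j', rfl⟩ : ∃ j', j = j' + 1 := ⟨j - 1, by omega⟩
          rw [List.getElem_cons_succ, List.getElem_cons_succ] at hadj'
          exact hind i j' (by simpa using hi) (by simpa using hj) (by omega) hadj'
      · intro u hu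
        rcases List.mem_cons.mp hu with h | h
        · subst h; exact hz'C
        · exact hmem u h
    have := hmax _ hgood
    simp only [List.length_cons] at this
    omega
  have key : ∀ a, ReachIn G C w a → (a = v ∨ ReachIn G (C \ {v}) a w) := by
    intro a hr
    induction hr with
    | refl => right; exact ReflTransGen.refl
    | @tail b c hwb hbc ih =>
        rcases hbc with ⟨hadj, hbC, hcC⟩
        by_cases hcv : c = v
        · left; exact hcv
        · right
          by_cases hbv : b = v
          · subst hbv; exact hext c hcC hcv hadj
          · rcases ih with h | h
            · exact absurd h hbv
            · exact ReflTransGen.head ⟨hadj.symm, ⟨hcC, by simpa using hcv⟩,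
                ⟨hbC, by simpa using hbv⟩⟩ h
  intro a ha
  have hwC : w ∈ C := (htail 1 h1 (by omega)).1
  rcases key a (hconn _ hwC _ ha.1) with h | h
  · exact absurd h (by simpa using ha.2)
  · exact h

/-- the cyclic ordering for the wheel-free contradiction: `s_v, l..., s_w` -/
def cycFun (s_v s_w : V) (l : List V) (i : Fin (l.length + 2)) : V :=
  if h : i.1 = 0 then s_v
  else if h' : i.1 = l.length + 1 then s_w
  else l[i.1 - 1]'(by have := i.2; omega)

lemma cycFun_zero {s_v s_w : V} {l : List V} {i : Fin (l.length + 2)} (h : i.1 = 0) :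
    cycFun s_v s_w l i = s_v := by simp [cycFun, h]

lemma cycFun_last {s_v s_w : V} {l : List V} {i : Fin (l.length + 2)} (h : i.1 = l.length + 1) :
    cycFun s_v s_w l i = s_w := by simp [cycFun, h]

lemma cycFun_mid {s_v s_w : V} {l : List V} {i : Fin (l.length + 2)} (h : i.1 ≠ 0)
    (h' : i.1 ≠ l.length + 1) :
    cycFun s_v s_w l i = l[i.1 - 1]'(by have := i.2; omega) := by simp [cycFun, h, h']


lemma fin_sub_val_lt {m : ℕ} {a b : Fin (m+2)} (h : a.1 < b.1) :
    ((b - a : Fin (m+2)) : ℕ) = b.1 - a.1 ∧ ((a - b : Fin (m+2)) : ℕ) = (m+2) - b.1 + a.1 := by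
  have hb := b.2
  have ha := a.2
  constructor
  · rw [Fin.sub_def]
    simp only
    rw [show (m + 2 - a.1 + b.1) = (m+2) + (b.1 - a.1) by omega, Nat.add_mod_left,
      Nat.mod_eq_of_lt (by omega)]
  · rw [Fin.sub_def]
    simp only
    rw [Nat.mod_eq_of_lt (by omega)]

lemma chordal_no_fin_cycle (hG : IsChordal G) {n : ℕ} (h4 : 4 ≤ n) (f : Fin n → V)
    (hinj : Function.Injective f)
    (hiff : ∀ a b : Fin n, a.1 < b.1 →
      (G.Adj (f a) (f b) ↔ (b.1 = a.1 + 1 ∨ (a.1 = 0 ∧ b.1 + 1 = n)))) : False := by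
  obtain ⟨m, rfl⟩ : ∃ m, n = m + 2 := ⟨n - 2, by omega⟩
  refine (hG (m+2) h4).false ⟨⟨f, hinj⟩, ?_⟩
  intro a b
  simp only [Function.Embedding.coeFn_mk]
  have key : ∀ a b : Fin (m+2), a.1 < b.1 → (G.Adj (f a) (f b) ↔ (cycleGraph (m+2)).Adj a b) := by
    intro a b hab
    rw [cycleGraph_adj, hiff a b hab]
    obtain ⟨h1, h2⟩ := fin_sub_val_lt hab
    have hb := b.2
    constructor
    · rintro (h | ⟨h, h'⟩)
      · right; rw [Fin.ext_iff, h1, Fin.val_one]; omega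
      · left; rw [Fin.ext_iff, h2, Fin.val_one]; omega
    · rintro (h | h)
      · rw [Fin.ext_iff, h2, Fin.val_one] at h
        right; omega
      · rw [Fin.ext_iff, h1, Fin.val_one] at h
        left; omega
  rcases lt_trichotomy a.1 b.1 with h | h | h
  · exact key a b h
  · have : a = b := Fin.ext h
    subst this
    simp
  · rw [G.adj_comm, (cycleGraph (m+2)).adj_comm]
    exact key b a h

lemma good_walk_two {x y : V} (hxy : x ≠ y) (h : GoodWalk G C x y l) : 2 ≤ l.length := by
  rcases l with _ | ⟨a, t⟩
  · exact absurd rfl h.1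
  · rcases t with _ | ⟨b, t'⟩
    · exfalso
      obtain ⟨_, _, hh, hgl, _⟩ := h
      simp only [head?_cons, Option.some_inj] at hh
      simp only [getLast?_singleton, Option.some_inj] at hgl
      exact hxy (by rw [← hh, hgl])
    · simp only [List.length_cons]; omega

lemma exists_dominating [Fintype V] (hG : IsChordal G) {S : Set V} (hclS : G.IsClique S) :
    ∀ C : Set V, C.Nonempty → (∀ a ∈ C, ∀ b ∈ C, ReachIn G C a b) → Disjoint C S →
    (∀ s ∈ S, ∃ d ∈ C, G.Adj s d) → ∃ c ∈ C, ∀ s ∈ S, G.Adj c s := by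
  classical
  suffices main : ∀ n (C : Set V), C.ncard ≤ n → C.Nonempty →
      (∀ a ∈ C, ∀ b ∈ C, ReachIn G C a b) → Disjoint C S →
      (∀ s ∈ S, ∃ d ∈ C, G.Adj s d) → ∃ c ∈ C, ∀ s ∈ S, G.Adj c s by
    intro C h1 h2 h3 h4
    exact main C.ncard C le_rfl h1 h2 h3 h4
  intro n
  induction n with
  | zero =>
      intro C hcard hne
      exfalso
      rw [Nat.le_zero, Set.ncard_eq_zero C.toFinite] at hcard
      exact hne.ne_empty hcard
  | succ n ih =>
      intro C hcard hne hconn hdisj hfull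
      by_cases hdom : ∃ c ∈ C, ∀ s ∈ S, G.Adj c s
      · exact hdom
      exfalso
      obtain ⟨l, hlp, hmax⟩ := exists_max_path (G := G) hne
      obtain ⟨hlne, hch, hnd, hind, hmem⟩ := id hlp
      have h0 : 0 < l.length := List.length_pos_iff.mpr hlne
      have h2 : 2 ≤ l.length := by
        by_contra hlen
        push_neg at hlen
        have hsingle : ∀ a ∈ C, a = l[0]'h0 := by
          intro a ha
          by_contra hne'
          have hr : ReachIn G C (l[0]'h0) a := hconn _ (hmem _ (List.getElem_mem h0)) _ ha
          obtain ⟨m, hm⟩ := reachIn_toList (hmem _ (List.getElem_mem h0)) hr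
          obtain ⟨m', hm', hmnd, hmind⟩ := exists_induced_path ⟨m, hm⟩
          have hm2 : 2 ≤ m'.length := good_walk_two (fun h => hne' h.symm) hm'
          have := hmax m' ⟨hm'.1, hm'.2.1, hmnd, hmind, hm'.2.2.2.2⟩
          omega
        apply hdom
        refine ⟨l[0]'h0, hmem _ (List.getElem_mem h0), ?_⟩
        intro s hs
        obtain ⟨d, hd, hds⟩ := hfull s hs
        rw [hsingle d hd] at hds
        exact hds.symm
      have h1 : 1 < l.length := by omega
      have hv_mem : (l[0]'h0) ∈ C := hmem _ (List.getElem_mem h0)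
      have hLm : l.length - 1 < l.length := by omega
      have hw_mem : (l[l.length - 1]'hLm) ∈ C := hmem _ (List.getElem_mem hLm)
      have hconn_v : ∀ a ∈ C \ {l[0]'h0}, ∀ b ∈ C \ {l[0]'h0},
          ReachIn G (C \ {l[0]'h0}) a b := by
        intro a ha b hb
        exact (remove_head hconn hlp hmax h0 h1 a ha).trans
          (remove_head hconn hlp hmax h0 h1 b hb).symm
      have hrl : GoodPath G C l.reverse := hlp.reverse
      have hmax_r : ∀ l', GoodPath G C l' → l'.length ≤ l.reverse.length := by
        intro l' h'; rw [List.length_reverse]; exact hmax l' h'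
      have h0r : 0 < l.reverse.length := by rw [List.length_reverse]; omega
      have h1r : 1 < l.reverse.length := by rw [List.length_reverse]; omega
      have hconn_w : ∀ a ∈ C \ {l.reverse[0]'h0r}, ∀ b ∈ C \ {l.reverse[0]'h0r},
          ReachIn G (C \ {l.reverse[0]'h0r}) a b := by
        intro a ha b hb
        exact (remove_head hconn hrl hmax_r h0r h1r a ha).trans
          (remove_head hconn hrl hmax_r h0r h1r b hb).symm
      have hrev0 : l.reverse[0]'h0r = l[l.length - 1]'hLm := by
        rw [List.getElem_reverse]
        simp
      rw [hrev0] at hconn_w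
      have hstep : ∀ u : V, u ∈ C →
          (∀ a ∈ C \ {u}, ∀ b ∈ C \ {u}, ReachIn G (C \ {u}) a b) →
          (C \ {u}).Nonempty →
          ∃ s ∈ S, (∀ d ∈ C, G.Adj s d → d = u) ∧ G.Adj s u := by
        intro u hu hconnu hneu
        by_cases hfullu : ∀ s ∈ S, ∃ d ∈ C \ {u}, G.Adj s d
        · exfalso
          have hcard' : (C \ {u}).ncard ≤ n := by
            have := Set.ncard_diff_singleton_lt_of_mem hu C.toFinite
            omega
          obtain ⟨c, hc, hcs⟩ := ih (C \ {u}) hcard' hneu hconnu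
            (hdisj.mono_left Set.diff_subset) hfullu
          exact hdom ⟨c, hc.1, hcs⟩
        · push_neg at hfullu
          obtain ⟨s, hs, hsno⟩ := hfullu
          obtain ⟨d, hd, hds⟩ := hfull s hs
          have hdu : d = u := by
            by_contra hne'
            exact hsno d ⟨hd, by simpa using hne'⟩ hds
          subst hdu
          refine ⟨s, hs, ?_, hds⟩
          intro d' hd' hadj'
          by_contra hne'
          exact hsno d' ⟨hd', by simpa using hne'⟩ hadj'
      have hvw_ne : (l[l.length - 1]'hLm) ≠ l[0]'h0 := by
        intro h
        have := hnd.getElem_inj_iff.mp h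
        omega
      obtain ⟨sv, hsvS, hsv_only, hsv_adj⟩ := hstep (l[0]'h0) hv_mem hconn_v
        ⟨l[l.length - 1]'hLm, hw_mem, by simpa using hvw_ne⟩
      obtain ⟨sw, hswS, hsw_only, hsw_adj⟩ := hstep (l[l.length - 1]'hLm) hw_mem hconn_w
        ⟨l[0]'h0, hv_mem, by simpa using (fun h => hvw_ne h.symm : ¬(l[0]'h0 = l[l.length-1]'hLm))⟩
      have hsvw_ne : sv ≠ sw := by
        intro h
        subst h
        exact hvw_ne (hsv_only _ hw_mem hsw_adj)
      have hsvw_adj : G.Adj sv sw := hclS hsvS hswS hsvw_ne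
      have hsvC : sv ∉ C := fun h => (Set.disjoint_left.mp hdisj h) hsvS
      have hswC : sw ∉ C := fun h => (Set.disjoint_left.mp hdisj h) hswS
      have harm : ∀ i : Fin (l.length+2), i.1 ≠ 0 → i.1 ≠ l.length + 1 →
          cycFun sv sw l i ∈ C := by
        intro i h h'
        rw [cycFun_mid h h']
        exact hmem _ (List.getElem_mem _)
      have hinj : Function.Injective (cycFun sv sw l) := by
        intro a b hab
        by_cases ha0 : a.1 = 0
        · by_cases hb0 : b.1 = 0
          · exact Fin.ext (by omega)
          · exfalso
            rw [cycFun_zero ha0] at hab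
            by_cases hbl : b.1 = l.length + 1
            · rw [cycFun_last hbl] at hab; exact hsvw_ne hab
            · have hm := harm b hb0 hbl
              rw [← hab] at hm
              exact hsvC hm
        · by_cases hal : a.1 = l.length + 1
          · by_cases hbl : b.1 = l.length + 1
            · exact Fin.ext (by omega)
            · exfalso
              rw [cycFun_last hal] at hab
              by_cases hb0 : b.1 = 0
              · rw [cycFun_zero hb0] at hab; exact hsvw_ne hab.symm
              · have hm := harm b hb0 hbl
                rw [← hab] at hm
                exact hswC hm
          · by_cases hb0 : b.1 = 0
            · exfalso
              rw [cycFun_zero hb0] at hab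
              have hm := harm a ha0 hal
              rw [hab] at hm
              exact hsvC hm
            · by_cases hbl : b.1 = l.length + 1
              · exfalso
                rw [cycFun_last hbl] at hab
                have hm := harm a ha0 hal
                rw [hab] at hm
                exact hswC hm
              · rw [cycFun_mid ha0 hal, cycFun_mid hb0 hbl] at hab
                have := hnd.getElem_inj_iff.mp hab
                exact Fin.ext (by omega)
      have hiff : ∀ a b : Fin (l.length + 2), a.1 < b.1 →
          (G.Adj (cycFun sv sw l a) (cycFun sv sw l b) ↔
            (b.1 = a.1 + 1 ∨ (a.1 = 0 ∧ b.1 + 1 = l.length + 2))) := by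
        intro a b hab
        have hb2 := b.2
        have ha2 := a.2
        by_cases ha0 : a.1 = 0
        · by_cases hbl : b.1 = l.length + 1
          · rw [cycFun_zero ha0, cycFun_last hbl]
            constructor
            · intro _; right; exact ⟨ha0, by omega⟩
            · intro _; exact hsvw_adj
          · have hb0 : b.1 ≠ 0 := by omega
            rw [cycFun_zero ha0, cycFun_mid hb0 hbl]
            have hbi : b.1 - 1 < l.length := by omega
            constructor
            · intro hadj
              have hbC := hmem _ (List.getElem_mem hbi)
              have heq := hsv_only _ hbC hadj
              have := hnd.getElem_inj_iff.mp heq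
              left; omega
            · rintro (h | h)
              · simp only [show b.1 - 1 = 0 from by omega]
                exact hsv_adj
              · exfalso; omega
        · by_cases hal : a.1 = l.length + 1
          · exfalso; omega
          · by_cases hbl : b.1 = l.length + 1
            · rw [cycFun_mid ha0 hal, cycFun_last hbl]
              have hai : a.1 - 1 < l.length := by omega
              constructor
              · intro hadj
                have haC := hmem _ (List.getElem_mem hai)
                have heq := hsw_only _ haC hadj.symm
                have := hnd.getElem_inj_iff.mp heq
                left; omega
              · rintro (h | h)
                · simp only [show a.1 - 1 = l.length - 1 from by omega]
                  exact hsw_adj.symm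
                · exfalso; omega
            · have hb0 : b.1 ≠ 0 := by omega
              rw [cycFun_mid ha0 hal, cycFun_mid hb0 hbl]
              have hai : a.1 - 1 < l.length := by omega
              have hbi : b.1 - 1 < l.length := by omega
              constructor
              · intro hadj
                by_contra hcon
                push_neg at hcon
                exact hind (a.1-1) (b.1-1) hai hbi (by omega) hadj
              · rintro (h | h)
                · have hcons := chain'_getElem hch (i := a.1-1) (by omega)
                  simp only [show a.1 - 1 + 1 = b.1 - 1 from by omega] at hcons
                  exact hcons
                · exfalso; omega
      exact chordal_no_fin_cycle hG (by omega) (cycFun sv sw l) hinj hiff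

lemma comp_eq {S D₁ D₂ : Set V} (h₁ : IsCompOf G S D₁) (h₂ : IsCompOf G S D₂) {v : V}
    (hv1 : v ∈ D₁) (hv2 : v ∈ D₂) : D₁ = D₂ := by
  have sub : ∀ (A B : Set V), IsCompOf G S A → IsCompOf G S B → v ∈ A → v ∈ B → A ⊆ B := by
    intro A B hA hB hvA hvB w hw
    have hr : ReachIn G A v w := reachIn_of_connected hA.2.2.1 hvA hw
    clear hw
    induction hr with
    | refl => exact hvB
    | @tail b c hab hbc ih =>
        refine hB.2.2.2 b ih c hbc.1 ?_
        exact fun h => Set.disjoint_left.mp hA.2.1 hbc.2.2 h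
  exact Set.Subset.antisymm (sub D₁ D₂ h₁ h₂ hv1 hv2) (sub D₂ D₁ h₂ h₁ hv2 hv1)

lemma comp_no_adj {S D₁ D₂ : Set V} (h₁ : IsCompOf G S D₁) (h₂ : IsCompOf G S D₂)
    (hne : D₁ ≠ D₂) : ∀ v ∈ D₁, ∀ w ∈ D₂, ¬ G.Adj v w := by
  intro v hv w hw hadj
  have hwS : w ∉ S := fun h => Set.disjoint_left.mp h₂.2.1 hw h
  exact hne (comp_eq h₁ h₂ (h₁.2.2.2 v hv w hadj hwS) hw)

lemma comp_disjoint {S D₁ D₂ : Set V} (h₁ : IsCompOf G S D₁) (h₂ : IsCompOf G S D₂)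
    (hne : D₁ ≠ D₂) : Disjoint D₁ D₂ :=
  Set.disjoint_left.mpr fun v hv1 hv2 => hne (comp_eq h₁ h₂ hv1 hv2)

lemma goodWalk_getElem_zero {x y : V} (h : GoodWalk G C x y l) (h0 : 0 < l.length) :
    l[0]'h0 = x := by
  have hh := h.2.2.1
  rw [List.head?_eq_getElem?, List.getElem?_eq_getElem h0] at hh
  exact Option.some_inj.mp hh

lemma goodWalk_getElem_last {x y : V} (h : GoodWalk G C x y l) (h0 : 0 < l.length) :
    l[l.length - 1]'(by omega) = y := by
  have hh := h.2.2.2.1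
  rw [List.getLast?_eq_getElem?, List.getElem?_eq_getElem (by omega : l.length - 1 < l.length)] at hh
  exact Option.some_inj.mp hh

lemma good_walk_three {x y : V} (hxy : x ≠ y) (hnadj : ¬ G.Adj x y) (h : GoodWalk G C x y l) :
    3 ≤ l.length := by
  have h2 := good_walk_two hxy h
  by_contra hcon
  push_neg at hcon
  have h0 : 0 < l.length := by omega
  have hx0 := goodWalk_getElem_zero h h0
  have hy1 := goodWalk_getElem_last h h0
  have hadj := chain'_getElem h.2.1 (i := 0) (by omega : 0 + 1 < l.length)
  have e : l.length - 1 = 0 + 1 := by omega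
  simp only [e] at hy1
  rw [hx0, hy1] at hadj
  exact hnadj hadj

/-- cyclic ordering for two glued induced paths -/
def cycFun2 (l₁ l₂ : List V) (i : Fin (l₁.length + (l₂.length - 2))) : V :=
  if h : i.1 < l₁.length then l₁[i.1]
  else l₂[l₁.length + (l₂.length - 2) - i.1]'(by have := i.2; omega)

lemma cycFun2_lt {l₁ l₂ : List V} {i : Fin (l₁.length + (l₂.length - 2))}
    (h : i.1 < l₁.length) : cycFun2 l₁ l₂ i = l₁[i.1]'h := by simp [cycFun2, h]

lemma cycFun2_ge {l₁ l₂ : List V} {i : Fin (l₁.length + (l₂.length - 2))}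
    (h : ¬ i.1 < l₁.length) :
    cycFun2 l₁ l₂ i = l₂[l₁.length + (l₂.length - 2) - i.1]'(by have := i.2; omega) := by
  simp [cycFun2, h]

lemma sep_is_clique [Fintype V] (hG : IsChordal G) {S : Set V} (hS : IsMinSep G S) :
    G.IsClique S := by
  classical
  obtain ⟨D₁, D₂, hc1, hc2, hne12, hf1, hf2⟩ := hS
  intro s hs t ht hst
  by_contra hnadj
  have hno12 : ∀ v ∈ D₁, ∀ w ∈ D₂, ¬ G.Adj v w := comp_no_adj hc1 hc2 hne12
  have hd12 : Disjoint D₁ D₂ := comp_disjoint hc1 hc2 hne12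
  have build : ∀ (E : Set V), IsCompOf G S E → FullTo G S E →
      ∃ l, GoodWalk G (E ∪ {s, t}) s t l ∧ l.Nodup ∧ InducedL G l ∧ 3 ≤ l.length := by
    intro E hcE hfE
    obtain ⟨ds, hds, hsds⟩ := hfE s hs
    obtain ⟨dt, hdt, htdt⟩ := hfE t ht
    have hsmem : s ∈ E ∪ {s, t} := Set.mem_union_right _ (by simp)
    have htmem : t ∈ E ∪ {s, t} := Set.mem_union_right _ (by simp)
    have hreach : ReachIn G (E ∪ {s, t}) s t := by
      have h1 : ReachIn G E ds dt := reachIn_of_connected hcE.2.2.1 hds hdt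
      have h2 : ReachIn G (E ∪ {s, t}) ds dt := h1.mono Set.subset_union_left
      refine ReflTransGen.head ⟨hsds, hsmem, Set.mem_union_left _ hds⟩
        (h2.trans (ReflTransGen.single ⟨htdt.symm, Set.mem_union_left _ hdt, htmem⟩))
    obtain ⟨m, hm⟩ := reachIn_toList hsmem hreach
    obtain ⟨l, hgw, hnd, hind⟩ := exists_induced_path ⟨m, hm⟩
    exact ⟨l, hgw, hnd, hind, good_walk_three hst hnadj hgw⟩
  have int_mem : ∀ (E : Set V) (l : List V), Disjoint E S → GoodWalk G (E ∪ {s, t}) s t l →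
      l.Nodup → ∀ k (hk : k < l.length), 0 < k → k + 1 < l.length → (l[k]'hk) ∈ E := by
    intro E l hdisjE hgw hnd k hk h0k hklast
    have h0 : 0 < l.length := by omega
    have hC := hgw.2.2.2.2 _ (List.getElem_mem hk)
    rcases hC with hE | hst'
    · exact hE
    · exfalso
      rcases hst' with h | h
      · have h0eq := goodWalk_getElem_zero hgw h0
        rw [← h0eq] at h
        have := hnd.getElem_inj_iff.mp h
        omega
      · simp only [Set.mem_singleton_iff] at h
        have hleq := goodWalk_getElem_last hgw h0
        rw [← hleq] at h
        have := hnd.getElem_inj_iff.mp h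
        omega
  obtain ⟨l₁, hgw₁, hnd₁, hind₁, hlen₁⟩ := build D₁ hc1 hf1
  obtain ⟨l₂, hgw₂, hnd₂, hind₂, hlen₂⟩ := build D₂ hc2 hf2
  have hch₁ := hgw₁.2.1
  have hch₂ := hgw₂.2.1
  have int1 := int_mem D₁ l₁ hc1.2.1 hgw₁ hnd₁
  have int2 := int_mem D₂ l₂ hc2.2.1 hgw₂ hnd₂
  have h01 : 0 < l₁.length := by omega
  have h02 : 0 < l₂.length := by omega
  have hs1 : l₁[0]'h01 = s := goodWalk_getElem_zero hgw₁ h01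
  have ht1 : l₁[l₁.length - 1]'(by omega) = t := goodWalk_getElem_last hgw₁ h01
  have hs2 : l₂[0]'h02 = s := goodWalk_getElem_zero hgw₂ h02
  have ht2 : l₂[l₂.length - 1]'(by omega) = t := goodWalk_getElem_last hgw₂ h02
  have hsD2 : s ∉ D₂ := fun h => Set.disjoint_left.mp hc2.2.1 h hs
  have htD2 : t ∉ D₂ := fun h => Set.disjoint_left.mp hc2.2.1 h ht
  have hN4 : 4 ≤ l₁.length + (l₂.length - 2) := by omega
  -- injectivity
  have hinj : Function.Injective (cycFun2 l₁ l₂) := by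
    intro a b hab
    have ha2 := a.2
    have hb2 := b.2
    have mixed : ∀ (i : ℕ) (hi : i < l₁.length) (k : ℕ) (hk : k < l₂.length),
        0 < k → k + 1 < l₂.length → (l₁[i]'hi) = (l₂[k]'hk) → False := by
      intro i hi k hk hk0 hk1 heq
      have hkD2 : (l₂[k]'hk) ∈ D₂ := int2 k hk hk0 hk1
      rcases Nat.eq_zero_or_pos i with h | h
      · subst h
        rw [hs1] at heq
        exact hsD2 (heq ▸ hkD2)
      · by_cases hil : i = l₁.length - 1
        · subst hil
          rw [ht1] at heq
          exact htD2 (heq ▸ hkD2)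
        · have hiD1 : (l₁[i]'hi) ∈ D₁ := int1 i hi h (by omega)
          rw [heq] at hiD1
          exact Set.disjoint_left.mp hd12 hiD1 hkD2
    by_cases ha : a.1 < l₁.length <;> by_cases hb : b.1 < l₁.length
    · rw [cycFun2_lt ha, cycFun2_lt hb] at hab
      exact Fin.ext (hnd₁.getElem_inj_iff.mp hab)
    · rw [cycFun2_lt ha, cycFun2_ge hb] at hab
      exact absurd hab (fun h => mixed _ ha _ _ (by omega) (by omega) h)
    · rw [cycFun2_ge ha, cycFun2_lt hb] at hab
      exact absurd hab.symm (fun h => mixed _ hb _ _ (by omega) (by omega) h)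
    · rw [cycFun2_ge ha, cycFun2_ge hb] at hab
      have := hnd₂.getElem_inj_iff.mp hab
      exact Fin.ext (by omega)
  have hiff : ∀ a b : Fin (l₁.length + (l₂.length - 2)), a.1 < b.1 →
      (G.Adj (cycFun2 l₁ l₂ a) (cycFun2 l₁ l₂ b) ↔
        (b.1 = a.1 + 1 ∨ (a.1 = 0 ∧ b.1 + 1 = l₁.length + (l₂.length - 2)))) := by
    intro a b hab
    have ha2 := a.2
    have hb2 := b.2
    by_cases ha : a.1 < l₁.length <;> by_cases hb : b.1 < l₁.length
    · -- both in l₁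
      rw [cycFun2_lt ha, cycFun2_lt hb]
      constructor
      · intro hadj
        by_contra hcon
        push_neg at hcon
        exact hind₁ a.1 b.1 ha hb (by omega) hadj
      · rintro (h | ⟨h1, h2⟩)
        · have := chain'_getElem hch₁ (i := a.1) (by omega)
          simp only [show a.1 + 1 = b.1 from by omega] at this
          exact this
        · exfalso; omega
    · -- a in l₁, b in interior of l₂ (reversed)
      rw [cycFun2_lt ha, cycFun2_ge hb]
      set k := l₁.length + (l₂.length - 2) - b.1 with hkdef
      have hk1 : 1 ≤ k := by omega
      have hk2 : k ≤ l₂.length - 2 := by omega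
      rcases Nat.eq_zero_or_pos a.1 with ha0 | ha0
      · -- a = s
        constructor
        · intro hadj
          simp only [ha0] at hadj
          rw [hs1, ← hs2] at hadj
          by_cases hk1' : k = 1
          · right; exact ⟨ha0, by omega⟩
          · exfalso
            exact hind₂ 0 k h02 (by omega) (by omega) hadj
        · rintro (h | ⟨h1, h2⟩)
          · exfalso; omega
          · have hkone : k = 1 := by omega
            simp only [ha0]
            rw [hs1, ← hs2]
            simp only [show l₁.length + (l₂.length - 2) - ↑b = 1 from by omega]
            exact chain'_getElem hch₂ (i := 0) (by omega)
      · by_cases hal : a.1 = l₁.length - 1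
        · -- a = t
          constructor
          · intro hadj
            simp only [hal] at hadj
            rw [ht1, ← ht2] at hadj
            by_cases hke : k = l₂.length - 2
            · left; omega
            · exfalso
              exact hind₂ k (l₂.length - 1) (by omega) (by omega) (by omega) hadj.symm
          · rintro (h | ⟨h1, h2⟩)
            · have hke : k = l₂.length - 2 := by omega
              have hc := chain'_getElem hch₂ (i := l₂.length - 2) (by omega)
              simp only [show l₂.length - 2 + 1 = l₂.length - 1 from by omega] at hc
              simp only [hal]
              rw [ht1, ← ht2]
              simp only [show l₁.length + (l₂.length - 2) - ↑b = l₂.length - 2 from by omega]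
              exact hc.symm
            · exfalso; omega
        · -- a interior of l₁, b interior of l₂ : no adjacency, no consecutive
          have haD1 : (l₁[a.1]'ha) ∈ D₁ := int1 a.1 ha ha0 (by omega)
          have hkD2 : (l₂[k]'(by omega)) ∈ D₂ := int2 k (by omega) (by omega) (by omega)
          constructor
          · intro hadj
            exact absurd hadj (hno12 _ haD1 _ hkD2)
          · rintro (h | ⟨h1, h2⟩)
            · exfalso; omega
            · exfalso; omega
    · exfalso; omega
    · -- both in reversed interior of l₂
      rw [cycFun2_ge ha, cycFun2_ge hb]
      set ka := l₁.length + (l₂.length - 2) - a.1 with hkadef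
      set kb := l₁.length + (l₂.length - 2) - b.1 with hkbdef
      have hka : ka < l₂.length := by omega
      have hkb : kb < l₂.length := by omega
      have hlt : kb < ka := by omega
      constructor
      · intro hadj
        by_cases hcons : ka = kb + 1
        · left; omega
        · exfalso
          exact hind₂ kb ka hkb hka (by omega) hadj.symm
      · rintro (h | ⟨h1, h2⟩)
        · have hc := chain'_getElem hch₂ (i := kb) (by omega)
          simp only [show kb + 1 = ka from by omega] at hc
          exact hc.symm
        · exfalso; omega
  exact chordal_no_fin_cycle hG hN4 (cycFun2 l₁ l₂) hinj hiff

end Reach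

/-- In a chordal graph, for any minimal separator `S` and any component `D` of `G - S`
full to `S`, there is a maximal clique `Ω` with `S ⊊ Ω ⊆ N[D]`. -/
theorem statement_4 [Fintype V] (G : SimpleGraph V) (hG : IsChordal G)
    (S D : Set V) (hS : IsMinSep G S) (hD : IsCompOf G S D) (hfull : FullTo G S D) :
    ∃ Ω : Set V, MaxClique G Ω ∧ S ⊂ Ω ∧ Ω ⊆ closedNbhd G D := by
  classical
  have hclS : G.IsClique S := sep_is_clique hG hS
  obtain ⟨hDne, hDdisj, hDconn, hDclosed⟩ := hD
  obtain ⟨c, hcD, hcdom⟩ := exists_dominating hG hclS D hDne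
    (fun a ha b hb => reachIn_of_connected hDconn ha hb) hDdisj hfull
  have hcS : c ∉ S := fun h => Set.disjoint_left.mp hDdisj hcD h
  have hB : G.IsClique (insert c S) :=
    hclS.insert fun b hb _ => hcdom b hb
  have hBsub : (insert c S : Set V) ⊆ closedNbhd G D := by
    intro x hx
    rcases Set.mem_insert_iff.mp hx with rfl | hx
    · exact Or.inl hcD
    · obtain ⟨d, hd, hxd⟩ := hfull x hx
      exact Or.inr ⟨fun h => Set.disjoint_left.mp hDdisj h hx, d, hd, hxd⟩
  set P : Finset V → Prop := fun T =>
    G.IsClique (T : Set V) ∧ (insert c S : Set V) ⊆ ↑T ∧ ↑T ⊆ closedNbhd G D with hP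
  have hBP : P (insert c S : Set V).toFinset := by
    rw [hP]
    simp only [Set.coe_toFinset]
    exact ⟨hB, subset_rfl, hBsub⟩
  obtain ⟨T, hTmem, hTmax⟩ := Finset.exists_max_image
    (Finset.univ.filter P) Finset.card ⟨_, Finset.mem_filter.mpr ⟨Finset.mem_univ _, hBP⟩⟩
  rw [Finset.mem_filter, hP] at hTmem
  obtain ⟨-, hTcl, hTB, hTN⟩ := hTmem
  have hcT : c ∈ (T : Set V) := hTB (Set.mem_insert _ _)
  refine ⟨↑T, ⟨hTcl, ?_⟩, ?_, hTN⟩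
  · intro T' hT' hsub
    refine Set.Subset.antisymm ?_ hsub
    intro v hv
    by_contra hvT
    have hvC : v ∈ closedNbhd G D := by
      have hvc : G.Adj v c := hT' hv (hsub hcT) (fun h => hvT (h ▸ hcT))
      rcases Classical.em (v ∈ D) with h | h
      · exact Or.inl h
      · exact Or.inr ⟨h, c, hcD, hvc⟩
    have hP' : P (insert v T) := by
      rw [hP]
      refine ⟨?_, ?_, ?_⟩
      · rw [Finset.coe_insert]
        apply hT'.subset
        intro u hu
        rcases Set.mem_insert_iff.mp hu with rfl | hu
        · exact hv
        · exact hsub hu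
      · rw [Finset.coe_insert]
        exact fun u hu => Set.mem_insert_of_mem _ (hTB hu)
      · rw [Finset.coe_insert]
        intro u hu
        rcases Set.mem_insert_iff.mp hu with rfl | hu
        · exact hvC
        · exact hTN hu
    have hle := hTmax _ (Finset.mem_filter.mpr ⟨Finset.mem_univ _, hP'⟩)
    rw [Finset.card_insert_of_notMem (by simpa using hvT)] at hle
    omega
  · rw [Set.ssubset_def]
    constructor
    · exact fun x hx => hTB (Set.mem_insert_of_mem _ hx)
    · exact fun hcon => hcS (hcon hcT)
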